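/- For i.i.d. standard exponential values v₁, v₂ with v = min(v₁,v₂) and x = max(v₁,v₂) − v, the conditional expectation of the benchmark satisfies E[B | v] = ∫₀^v (v + x/2)e^{−x}dx + ∫_v^∞ (v/2 + x)e^{−x}dx = v + (1 + e^{−v})/2. -/

import Mathlib

open MeasureTheory intervalIntegral Set

/-- Conditional expectation of the benchmark given the minimum value `v`, for
i.i.d. standard exponential values: with `x = max - min` standard exponential,
`E[B | v] = ∫₀^v (v + x/2) e^{-x} dx + ∫_v^∞ (v/2 + x) e^{-x} dx
          = v + (1 + e^{-v})/2`. -/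
theorem conditional_expected_benchmark (v : ℝ) (hv : 0 ≤ v) :
    (∫ x in (0:ℝ)..v, (v + x / 2) * Real.exp (-x)) +
        (∫ x in Ioi v, (v / 2 + x) * Real.exp (-x)) =
      v + (1 + Real.exp (-v)) / 2 := by
  have hexp : ∀ x : ℝ, HasDerivAt (fun x : ℝ => Real.exp (-x)) (-Real.exp (-x)) x := by
    intro x
    simpa [Function.comp_def] using (Real.hasDerivAt_exp (-x)).comp x ((hasDerivAt_id x).neg)
  have h1 : (∫ x in (0:ℝ)..v, (v + x / 2) * Real.exp (-x)) =
      (v + 1/2) - (v + v/2 + 1/2) * Real.exp (-v) := by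
    have hd : ∀ x ∈ Set.uIcc (0:ℝ) v,
        HasDerivAt (fun x => -(v + x/2 + 1/2) * Real.exp (-x))
          ((v + x/2) * Real.exp (-x)) x := by
      intro x _
      have h := ((hasDerivAt_id x).const_mul (-(1/2):ℝ)).add_const (-(v + 1/2))
      have := h.mul (hexp x)
      convert this using 1
      · rfl
      · rfl
      · ext y; simp only [id_eq, Pi.mul_apply]; ring
      · simp only [id_eq]; ring
    rw [intervalIntegral.integral_eq_sub_of_hasDerivAt hd]
    · simp [Real.exp_zero]; ring
    · apply Continuous.intervalIntegrable; continuity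
  have h2 : (∫ x in Ioi v, (v / 2 + x) * Real.exp (-x)) =
      0 - (-(v/2 + v + 1) * Real.exp (-v)) := by
    apply integral_Ioi_of_hasDerivAt_of_nonneg (g := fun x => -(v/2 + x + 1) * Real.exp (-x))
    · exact (Continuous.continuousWithinAt (by continuity))
    · intro x _
      have h := ((hasDerivAt_id x).const_mul (-1:ℝ)).add_const (-(v/2 + 1))
      have := h.mul (hexp x)
      convert this using 1
      · rfl
      · rfl
      · ext y; simp only [id_eq, Pi.mul_apply]; ring
      · simp only [id_eq]; ring
    · intro x hx
      have hxv : v < x := hx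
      have hx0 : 0 < v/2 + x := by linarith
      positivity
    · have ha : Filter.Tendsto (fun x : ℝ => -(v/2+1) * Real.exp (-x))
          Filter.atTop (nhds 0) := by
        simpa using Real.tendsto_exp_neg_atTop_nhds_zero.const_mul (-(v/2+1))
      have hb : Filter.Tendsto (fun x : ℝ => -(x * Real.exp (-x)))
          Filter.atTop (nhds 0) := by
        simpa using (Real.tendsto_pow_mul_exp_neg_atTop_nhds_zero 1).neg
      have := ha.add hb
      rw [add_zero] at this
      refine this.congr (fun x => ?_)
      ring
  rw [h1, h2]
  ring
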